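/- Let Ω ⊂ ℝ³ and let K : S² × S² × Ω × (0,∞) → ℝ be continuous such that for every (x,ν) ∈ Ω × (0,∞) the kernel K_{x,ν}(n,n') = K(n,n',x,ν) is non-negative, rotation invariant, and satisfies ∫_{S²} K_{x,ν}(n,n') dn = 1 for every n' ∈ S². If φ : S² × Ω × (0,∞) → ℝ is bounded and measurable and for every (x,ν) ∈ Ω × (0,∞) one has φ(n,x,ν) = ∫_{S²} K_{x,ν}(n,n') φ(n',x,ν) dn' for almost every n ∈ S², then for every (x,ν) the function n ↦ φ(n,x,ν) is almost everywhere equal to a constant c(x,ν). -/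

import Mathlib

open MeasureTheory Metric

noncomputable section

/-- The ambient Euclidean space `ℝ³`. -/
abbrev E3 : Type := EuclideanSpace ℝ (Fin 3)

/-- The unit sphere `S² ⊂ ℝ³`. -/
abbrev S2 : Type := Metric.sphere (0 : E3) 1

/-- The surface measure on the unit sphere `S²` (with total mass `4π`). -/
def μS : Measure S2 := (volume : Measure E3).toSphere

/-- A rotation of `ℝ³`: an orthogonal (i.e. norm preserving linear) transformation with
determinant `1`, i.e. an element of `SO(3)`. -/
def IsRotation (R : E3 ≃ₗᵢ[ℝ] E3) : Prop :=
  LinearMap.det (R.toLinearEquiv : E3 →ₗ[ℝ] E3) = 1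

/-- The action of an orthogonal transformation on the unit sphere. -/
def rotate (R : E3 ≃ₗᵢ[ℝ] E3) (n : S2) : S2 :=
  ⟨R n, by
    have hn : ‖(n : E3)‖ = 1 := mem_sphere_zero_iff_norm.mp n.2
    simp [mem_sphere_zero_iff_norm, hn]⟩

/-- A scattering kernel: a continuous, non-negative, rotation invariant function
`K : S² × S² → ℝ` with `∫_{S²} K(n,n') dn = 1` for every `n'`. -/
structure IsScatteringKernel (K : S2 → S2 → ℝ) : Prop where
  continuous : Continuous (Function.uncurry K)
  nonneg : ∀ n n' : S2, 0 ≤ K n n'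
  normalized : ∀ n' : S2, ∫ n : S2, K n n' ∂μS = 1
  rotation_invariant : ∀ R : E3 ≃ₗᵢ[ℝ] E3, IsRotation R →
    ∀ n n' : S2, K (rotate R n) (rotate R n') = K n n'



open scoped Pointwise ENNReal RealInnerProductSpace

-- instances
instance : IsFiniteMeasure μS := by unfold μS; infer_instance
instance : Nonempty S2 := by
  have : (sphere (0:E3) 1).Nonempty := NormedSpace.sphere_nonempty.2 zero_le_one
  exact this.to_subtype
instance : PreconnectedSpace S2 := by
  have hr : 1 < Module.rank ℝ E3 := by
    rw [← Module.finrank_eq_rank]; norm_cast; simp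
  exact (isPreconnected_iff_preconnectedSpace).1 (isConnected_sphere hr 0 zero_le_one).isPreconnected

instance : Measure.IsOpenPosMeasure μS := by
  constructor
  intro U hU hne
  unfold μS
  rw [Measure.toSphere_apply' _ hU.measurableSet]
  obtain ⟨V, hV, hUV⟩ := isOpen_induced_iff.1 hU
  set g : E3 → E3 := fun x => ‖x‖⁻¹ • x with hg
  set C : Set E3 := {x | 0 < ‖x‖ ∧ ‖x‖ < 1 ∧ g x ∈ V} with hC
  have hCopen : IsOpen C := by
    rw [isOpen_iff_mem_nhds]
    rintro x ⟨hx0, hx1, hxV⟩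
    have hxne : x ≠ 0 := by simpa [norm_pos_iff] using hx0
    have hgc : ContinuousAt g x := by
      exact (continuousAt_id.norm.inv₀ (by simpa using hxne)).smul continuousAt_id
    have h1 : {y : E3 | 0 < ‖y‖} ∈ nhds x := (isOpen_lt continuous_const continuous_norm).mem_nhds hx0
    have h2 : {y : E3 | ‖y‖ < 1} ∈ nhds x := (isOpen_lt continuous_norm continuous_const).mem_nhds hx1
    have h3 : g ⁻¹' V ∈ nhds x := hgc.preimage_mem_nhds (hV.mem_nhds hxV)
    filter_upwards [h1, h2, h3] with y hy1 hy2 hy3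
    exact ⟨hy1, hy2, hy3⟩
  have hCne : C.Nonempty := by
    obtain ⟨u, hu⟩ := hne
    refine ⟨(1/2 : ℝ) • (u : E3), ?_, ?_, ?_⟩
    · have : ‖(u:E3)‖ = 1 := mem_sphere_zero_iff_norm.mp u.2
      simp [norm_smul, this]
    · have : ‖(u:E3)‖ = 1 := mem_sphere_zero_iff_norm.mp u.2
      simp [norm_smul, this]; norm_num
    · have hnu : ‖(u:E3)‖ = 1 := mem_sphere_zero_iff_norm.mp u.2
      have : g ((1/2 : ℝ) • (u:E3)) = (u : E3) := by
        rw [hg]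
        simp only [norm_smul, hnu]
        rw [smul_smul]
        norm_num
      rw [this]
      have : u ∈ U := hu
      rw [← hUV] at this
      exact this
  have hsub : C ⊆ Set.Ioo (0:ℝ) 1 • (Subtype.val '' U) := by
    rintro x ⟨hx0, hx1, hxV⟩
    have hxne : x ≠ 0 := by simpa [norm_pos_iff] using hx0
    have hmem : g x ∈ sphere (0:E3) 1 := by
      rw [mem_sphere_zero_iff_norm, hg]
      simp only [norm_smul, norm_inv, norm_norm]
      rw [inv_mul_cancel₀ hx0.ne']
    refine ⟨‖x‖, Set.mem_Ioo.2 ⟨hx0, hx1⟩, g x, ⟨⟨g x, hmem⟩, ?_, rfl⟩, ?_⟩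
    · rw [← hUV]; exact hxV
    · rw [hg]; simp [smul_smul]
      rw [mul_inv_cancel₀ (by simpa using hx0.ne')]
      simp
  have hpos : (0:ℝ≥0∞) < volume (Set.Ioo (0:ℝ) 1 • (Subtype.val '' U)) :=
    lt_of_lt_of_le (hCopen.measure_pos volume hCne) (measure_mono hsub)
  refine mul_ne_zero ?_ hpos.ne'
  simp


lemma finrank_orth (a : E3) (ha : a ≠ 0) : Module.finrank ℝ ((ℝ ∙ a)ᗮ : Submodule ℝ E3) = 2 := by
  have h1 : Module.finrank ℝ ((ℝ ∙ a) : Submodule ℝ E3) = 1 := finrank_span_singleton ha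
  have h2 := Submodule.finrank_add_finrank_orthogonal ((ℝ ∙ a) : Submodule ℝ E3)
  have h3 : Module.finrank ℝ E3 = 3 := by simp
  omega

lemma refl_line_is_rotation (a : E3) (ha : a ≠ 0) :
    IsRotation (Submodule.reflection (ℝ ∙ a)) := by
  unfold IsRotation
  have hd := Submodule.det_reflection ((ℝ ∙ a) : Submodule ℝ E3)
  rw [finrank_orth a ha] at hd
  simpa using hd

lemma reflection_line_apply (a : E3) (x : E3) :
    Submodule.reflection (ℝ ∙ a) x = ((2 : ℝ) * (⟪a, x⟫ / ((‖a‖:ℝ) ^ 2))) • a - x := by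
  rw [Submodule.reflection_apply, Submodule.starProjection_singleton]
  simp only [RCLike.ofReal_real_eq_id, id_eq]
  rw [two_smul]
  module

lemma refl_sum_swap (u v : E3) (hu : ‖u‖ = 1) (hv : ‖v‖ = 1) (h : u + v ≠ 0) :
    Submodule.reflection (ℝ ∙ (u + v)) u = v := by
  rw [reflection_line_apply]
  set t : ℝ := ⟪u, v⟫ with ht
  have hip : ⟪u + v, u⟫ = 1 + t := by
    rw [inner_add_left, real_inner_self_eq_norm_sq, hu, real_inner_comm, ← ht]
    ring
  have hnrm : (‖u + v‖:ℝ) ^ 2 = 2 + 2 * t := by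
    rw [← real_inner_self_eq_norm_sq, inner_add_add_self, real_inner_self_eq_norm_sq,
      real_inner_self_eq_norm_sq, hu, hv, ht, real_inner_comm v u]
    ring
  have hpos : (0:ℝ) < 2 + 2 * t := by
    have h0 : (0:ℝ) < ‖u + v‖ := norm_pos_iff.2 h
    nlinarith [hnrm]
  rw [hip, hnrm]
  have h1 : (2 : ℝ) * ((1 + t) / (2 + 2 * t)) = 1 := by
    field_simp
    exact div_self (ne_of_gt (by linarith))
  rw [h1]
  module

lemma exists_swap_rotation (n n' : E3) (hn : ‖n‖ = 1) (hn' : ‖n'‖ = 1) :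
    ∃ R : E3 ≃ₗᵢ[ℝ] E3, IsRotation R ∧ R n = n' ∧ R n' = n := by
  by_cases h : n + n' = 0
  · have hn0 : n ≠ 0 := fun h0 => by rw [h0] at hn; simp at hn
    have hne : ((ℝ ∙ n)ᗮ : Submodule ℝ E3) ≠ ⊥ := by
      intro hbot
      have := finrank_orth n hn0
      rw [hbot] at this
      simp at this
    obtain ⟨a, haK, ha0⟩ := Submodule.exists_mem_ne_zero_of_ne_bot hne
    have horth : ⟪a, n⟫ = 0 := by
      have := (Submodule.mem_orthogonal _ a).1 haK n (Submodule.mem_span_singleton_self n)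
      rw [real_inner_comm]; exact this
    have hn'' : n' = -n := by linear_combination (norm := module) h
    refine ⟨Submodule.reflection (ℝ ∙ a), refl_line_is_rotation a ha0, ?_, ?_⟩
    · rw [reflection_line_apply, horth, hn'']; simp
    · rw [reflection_line_apply, hn'', inner_neg_right, horth]; simp
  · refine ⟨Submodule.reflection (ℝ ∙ (n + n')), refl_line_is_rotation _ h, ?_, ?_⟩
    · exact refl_sum_swap n n' hn hn' h
    · rw [add_comm] at h ⊢
      exact refl_sum_swap n' n hn' hn h

theorem scattering_ae_const (k : S2 → S2 → ℝ)
    (hkc : Continuous fun p : S2 × S2 => k p.1 p.2)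
    (hknn : ∀ n n', 0 ≤ k n n')
    (hsym : ∀ n n', k n n' = k n' n)
    (hnorm : ∀ n', ∫ n, k n n' ∂μS = 1)
    (f : S2 → ℝ) (hfm : Measurable f) (C : ℝ) (hfC : ∀ n, |f n| ≤ C)
    (hfix : f =ᵐ[μS] fun n => ∫ n', k n n' * f n' ∂μS) :
    ∃ c : ℝ, f =ᵐ[μS] fun _ => c := by
  -- integrability of continuous functions on S2
  have hcont_int : ∀ h : S2 → ℝ, Continuous h → Integrable h μS := by
    intro h hh
    exact hh.integrable_of_hasCompactSupport
      (IsCompact.of_isClosed_subset isCompact_univ (isClosed_tsupport h) (Set.subset_univ _))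
  have hf_int : Integrable f μS := by
    refine ⟨hfm.aestronglyMeasurable, ?_⟩
    exact (HasFiniteIntegral.of_bounded (C := C) (Filter.Eventually.of_forall fun n => by
      simpa using hfC n))
  -- bound on k
  obtain ⟨Ck, hCk⟩ : ∃ Ck, ∀ n n', ‖k n n'‖ ≤ Ck := by
    obtain ⟨Ck, hCk⟩ := isCompact_univ.exists_bound_of_continuousOn hkc.continuousOn
    exact ⟨Ck, fun n n' => hCk (n, n') trivial⟩
  set ψ : S2 → ℝ := fun n => ∫ n', k n n' * f n' ∂μS with hψ
  have hkcn : ∀ n : S2, Continuous fun n' => k n n' :=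
    fun n => hkc.comp (continuous_const.prodMk continuous_id)
  have hkcn' : ∀ n' : S2, Continuous fun n => k n n' :=
    fun n' => hkc.comp (continuous_id.prodMk continuous_const)
  have hint_kf : ∀ n : S2, Integrable (fun n' => k n n' * f n') μS := by
    intro n
    exact hf_int.bdd_mul (hkcn n).aestronglyMeasurable (Filter.Eventually.of_forall fun n' => hCk n n')
  have hψc : Continuous ψ := by
    rw [hψ]
    refine continuous_of_dominated (bound := fun _ => Ck * C)
      (fun n => (hint_kf n).aestronglyMeasurable) ?_ (integrable_const _) ?_
    · intro n
      refine Filter.Eventually.of_forall fun n' => ?_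
      show ‖k n n' * f n'‖ ≤ Ck * C
      rw [norm_mul]
      have h1 : ‖k n n'‖ ≤ Ck := hCk n n'
      have h2 : ‖f n'‖ ≤ C := by simpa using hfC n'
      exact mul_le_mul h1 h2 (norm_nonneg _) ((norm_nonneg _).trans h1)
    · refine Filter.Eventually.of_forall fun n' => ?_
      exact ((hkcn' n').mul continuous_const)
  have hfψ : f =ᵐ[μS] ψ := hfix
  -- everywhere fixed point for ψ
  have hψfix : ∀ n, ψ n = ∫ n', k n n' * ψ n' ∂μS := by
    intro n
    rw [hψ]
    exact integral_congr_ae ((Filter.EventuallyEq.refl _ fun n' => k n n').mul hfψ)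
  -- row normalization
  have hrow : ∀ n, ∫ n', k n n' ∂μS = 1 := by
    intro n
    rw [show (fun n' => k n n') = fun n' => k n' n from funext fun n' => hsym n n']
    exact hnorm n
  -- maximum
  obtain ⟨n₀, -, hn₀⟩ := isCompact_univ.exists_isMaxOn Set.univ_nonempty hψc.continuousOn
  set M : ℝ := ψ n₀ with hM
  have hle : ∀ n, ψ n ≤ M := fun n => hn₀ (Set.mem_univ n)
  -- key propagation lemma
  have key : ∀ n, ψ n = M → ∀ n', 0 < k n n' → ψ n' = M := by
    intro n hn
    have hint0 : ∫ n', k n n' * (M - ψ n') ∂μS = 0 := by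
      have hexp : (fun n' => k n n' * (M - ψ n')) =
          fun n' => k n n' * M - k n n' * ψ n' := funext fun n' => by ring
      rw [hexp, integral_sub ((hcont_int (fun n' => k n n' * M) ((hkcn n).mul continuous_const)))
        (hcont_int (fun n' => k n n' * ψ n') ((hkcn n).mul hψc)), integral_mul_const, hrow n, ← hψfix n, hn]
      ring
    have hg0 : (fun n' => k n n' * (M - ψ n')) = fun _ => (0:ℝ) := by
      have hgc : Continuous fun n' => k n n' * (M - ψ n') :=
        (hkcn n).mul (continuous_const.sub hψc)
      rw [← Continuous.ae_eq_iff_eq μS hgc continuous_const]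
      exact (integral_eq_zero_iff_of_nonneg
        (fun n' => mul_nonneg (hknn n n') (sub_nonneg.2 (hle n')))
        (hcont_int _ hgc)).1 hint0
    intro n' hkpos
    have := congrFun hg0 n'
    have h2 : M - ψ n' = 0 := by
      rcases mul_eq_zero.1 this with h | h
      · exact absurd h hkpos.ne'
      · exact h
    linarith
  -- the set where the max is attained is clopen
  set A : Set S2 := {n | ψ n = M} with hA
  have hA_closed : IsClosed A := isClosed_eq hψc continuous_const
  have hA_open : IsOpen A := by
    rw [isOpen_iff_mem_nhds]
    intro n hn
    -- find n' with k n n' > 0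
    have hex : ∃ n', 0 < k n n' := by
      by_contra hcon
      push_neg at hcon
      have hzero : (fun n' => k n n') = fun _ => (0:ℝ) :=
        funext fun n' => le_antisymm (hcon n') (hknn n n')
      have := hrow n
      rw [hzero] at this
      simp at this
    obtain ⟨n', hkpos⟩ := hex
    have hn'A : ψ n' = M := key n hn n' hkpos
    have hWopen : IsOpen {m | 0 < k n' m} := isOpen_lt continuous_const (hkcn n')
    have hnW : n ∈ {m | 0 < k n' m} := by
      have : k n' n = k n n' := (hsym n n').symm
      simpa [this] using hkpos
    have hWA : {m | 0 < k n' m} ⊆ A := fun m hm => key n' hn'A m hm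
    exact Filter.mem_of_superset (hWopen.mem_nhds hnW) hWA
  have hA_univ : A = Set.univ :=
    IsClopen.eq_univ ⟨hA_closed, hA_open⟩ ⟨n₀, rfl⟩
  refine ⟨M, hfψ.trans (Filter.Eventually.of_forall fun n => ?_)⟩
  have : n ∈ A := hA_univ ▸ Set.mem_univ n
  exact this


/-- For a continuous family `K_{x,ν}` of non-negative, normalized, rotation invariant kernels
parameterized by `(x,ν) ∈ Ω × (0,∞)`, any bounded measurable `φ : S² × Ω × (0,∞) → ℝ` which is,
for every `(x,ν)`, an a.e. fixed point of the corresponding scattering operator is, for every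
`(x,ν)`, almost everywhere equal to a constant `c(x,ν)`. -/
theorem fixedPoint_family_ae_const (Ω : Set E3)
    (K : S2 → S2 → Ω → Set.Ioi (0 : ℝ) → ℝ)
    (hcont : Continuous fun p : S2 × S2 × Ω × Set.Ioi (0 : ℝ) => K p.1 p.2.1 p.2.2.1 p.2.2.2)
    (hnonneg : ∀ (x : Ω) (ν : Set.Ioi (0 : ℝ)) (n n' : S2), 0 ≤ K n n' x ν)
    (hnorm : ∀ (x : Ω) (ν : Set.Ioi (0 : ℝ)) (n' : S2), ∫ n : S2, K n n' x ν ∂μS = 1)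
    (hrot : ∀ (x : Ω) (ν : Set.Ioi (0 : ℝ)) (R : E3 ≃ₗᵢ[ℝ] E3), IsRotation R →
      ∀ n n' : S2, K (rotate R n) (rotate R n') x ν = K n n' x ν)
    (φ : S2 → Ω → Set.Ioi (0 : ℝ) → ℝ)
    (hmeas : Measurable fun p : S2 × Ω × Set.Ioi (0 : ℝ) => φ p.1 p.2.1 p.2.2)
    (hbdd : ∃ C : ℝ, ∀ (n : S2) (x : Ω) (ν : Set.Ioi (0 : ℝ)), |φ n x ν| ≤ C)
    (hfix : ∀ (x : Ω) (ν : Set.Ioi (0 : ℝ)),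
      (fun n => φ n x ν) =ᵐ[μS] fun n => ∫ n' : S2, K n n' x ν * φ n' x ν ∂μS) :
    ∀ (x : Ω) (ν : Set.Ioi (0 : ℝ)), ∃ c : ℝ, (fun n => φ n x ν) =ᵐ[μS] fun _ => c := by
  obtain ⟨C, hC⟩ := hbdd
  intro x ν
  have hkc : Continuous fun p : S2 × S2 => K p.1 p.2 x ν := by
    have h1 : Continuous fun p : S2 × S2 => ((p.1, p.2, x, ν) : S2 × S2 × Ω × Set.Ioi (0:ℝ)) :=
      continuous_fst.prodMk (continuous_snd.prodMk continuous_const)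
    simpa [Function.comp_def] using hcont.comp h1
  have hsym : ∀ n n' : S2, K n n' x ν = K n' n x ν := by
    intro n n'
    obtain ⟨R, hR, h1, h2⟩ := exists_swap_rotation (n : E3) (n' : E3)
      (mem_sphere_zero_iff_norm.mp n.2) (mem_sphere_zero_iff_norm.mp n'.2)
    have hr := hrot x ν R hR n n'
    have e1 : rotate R n = n' := Subtype.ext h1
    have e2 : rotate R n' = n := Subtype.ext h2
    rw [e1, e2] at hr
    exact hr.symm
  have hfm : Measurable fun n : S2 => φ n x ν := by
    have h1 : Measurable fun n : S2 => ((n, x, ν) : S2 × Ω × Set.Ioi (0:ℝ)) :=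
      measurable_id.prodMk measurable_const
    simpa [Function.comp_def] using hmeas.comp h1
  exact scattering_ae_const (fun n n' => K n n' x ν) hkc (hnonneg x ν) hsym (hnorm x ν)
    (fun n => φ n x ν) hfm C (fun n => hC n x ν) (hfix x ν)
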